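/- Let A be a 1QFAC over a finite alphabet Σ with classical state set S and n quantum basis states that recognizes a language L ⊆ Σ* with cut-point λ isolated by ε. For s ∈ S let A_s = {w ∈ Σ* : s_w = s}. Then for every s ∈ S, the number of equivalence classes into which A_s is partitioned by the Myhill–Nerode equivalence ≡_L is at most (1 + 2/ε)^{2n}. -/

import Mathlib

noncomputable section

/-- The `n`-dimensional complex Hilbert space `ℂⁿ`. -/
abbrev QState (n : ℕ) := EuclideanSpace ℂ (Fin n)

/-- Apply a matrix to a vector of `ℂⁿ`. -/
def mApply {n : ℕ} (M : Matrix (Fin n) (Fin n) ℂ) (v : QState n) : QState n :=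
  Matrix.toEuclideanLin M v

/-- Myhill–Nerode equivalence: `x ≡_L y` iff `∀ z, xz ∈ L ↔ yz ∈ L`. -/
def mnEquiv {α : Type} (L : Set (List α)) (x y : List α) : Prop :=
  ∀ z : List α, x ++ z ∈ L ↔ y ++ z ∈ L

/-- Myhill–Nerode equivalence as a setoid. -/
def mnSetoid {α : Type} (L : Set (List α)) : Setoid (List α) where
  r := mnEquiv L
  iseqv := ⟨fun _ _ => Iff.rfl, fun h z => (h z).symm, fun h1 h2 z => (h1 z).trans (h2 z)⟩

/-- A 1QFAC: classical states `S` with initial state and transitions, an `n`-dimensional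
quantum part with a unit initial vector, a unitary for each (classical state, letter),
and an orthogonal projection (accepting measurement) for each classical state. -/
structure QFAC (Alph : Type) (S : Type) (n : ℕ) where
  s0 : S
  tr : S → Alph → S
  ψ0 : QState n
  ψ0_unit : ‖ψ0‖ = 1
  U : S → Alph → Matrix (Fin n) (Fin n) ℂ
  U_unitary : ∀ s σ, U s σ ∈ Matrix.unitaryGroup (Fin n) ℂ
  P : S → Matrix (Fin n) (Fin n) ℂ
  P_proj : ∀ s, (P s).conjTranspose = P s ∧ P s * P s = P s

namespace QFAC
variable {Alph S : Type} {n : ℕ}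

/-- `s_x`: the classical state reached after reading `x`. -/
def sState (A : QFAC Alph S n) (x : List Alph) : S := x.foldl A.tr A.s0

/-- `|ψ_x⟩`: the final quantum state after reading `x`. -/
def qState (A : QFAC Alph S n) (x : List Alph) : QState n :=
  (x.foldl (fun p σ => (A.tr p.1 σ, mApply (A.U p.1 σ) p.2)) (A.s0, A.ψ0)).2

/-- Acceptance probability `‖P_{s_x,acc}|ψ_x⟩‖²`. -/
def probAcc (A : QFAC Alph S n) (x : List Alph) : ℝ :=
  ‖mApply (A.P (A.sState x)) (A.qState x)‖ ^ 2

/-- Recognition with cut-point `lam` isolated by `ε`. -/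
def Recognizes (A : QFAC Alph S n) (L : Set (List Alph)) (lam ε : ℝ) : Prop :=
  (∀ x ∈ L, lam + ε ≤ A.probAcc x) ∧ (∀ x ∉ L, A.probAcc x ≤ lam - ε)

end QFAC

/-! ### Auxiliary lemmas -/

open Metric MeasureTheory Module
open scoped ComplexInnerProductSpace ENNReal

namespace QFACaux

variable {Alph S : Type} {n : ℕ}

/-- One step of the combined (classical, quantum) evolution. -/
def step (A : QFAC Alph S n) (p : S × QState n) (σ : Alph) : S × QState n :=
  (A.tr p.1 σ, mApply (A.U p.1 σ) p.2)

lemma qState_def (A : QFAC Alph S n) (x : List Alph) :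
    A.qState x = (x.foldl (step A) (A.s0, A.ψ0)).2 := rfl

lemma foldl_fst (A : QFAC Alph S n) (x : List Alph) (p : S × QState n) :
    (x.foldl (step A) p).1 = x.foldl A.tr p.1 := by
  induction x generalizing p with
  | nil => rfl
  | cons a x ih => simpa [step] using ih _

lemma sState_append (A : QFAC Alph S n) (x z : List Alph) :
    A.sState (x ++ z) = z.foldl A.tr (A.sState x) :=
  List.foldl_append ..

lemma qState_append (A : QFAC Alph S n) (x z : List Alph) :
    A.qState (x ++ z) = (z.foldl (step A) (A.sState x, A.qState x)).2 := by
  have h : x.foldl (step A) (A.s0, A.ψ0) = (A.sState x, A.qState x) :=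
    Prod.ext (foldl_fst A x _) rfl
  rw [qState_def, List.foldl_append, h]

lemma mApply_unitary_inner {U : Matrix (Fin n) (Fin n) ℂ}
    (hU : U ∈ Matrix.unitaryGroup (Fin n) ℂ) (v : QState n) :
    ⟪mApply U v, mApply U v⟫ = ⟪v, v⟫ := by
  have h1 : U.conjTranspose * U = 1 := by
    have := hU.1
    rwa [Matrix.star_eq_conjTranspose] at this
  have hadj : Matrix.toEuclideanLin U.conjTranspose (Matrix.toEuclideanLin U v) = v := by
    simp [Matrix.toEuclideanLin_apply, Matrix.mulVec_mulVec, h1, Matrix.one_mulVec]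
  calc ⟪mApply U v, mApply U v⟫
      = ⟪v, LinearMap.adjoint (Matrix.toEuclideanLin U) (Matrix.toEuclideanLin U v)⟫ :=
        (LinearMap.adjoint_inner_right _ _ _).symm
    _ = ⟪v, v⟫ := by
        rw [← Matrix.toEuclideanLin_conjTranspose_eq_adjoint, hadj]

lemma mApply_unitary_norm {U : Matrix (Fin n) (Fin n) ℂ}
    (hU : U ∈ Matrix.unitaryGroup (Fin n) ℂ) (v : QState n) :
    ‖mApply U v‖ = ‖v‖ := by
  have h := mApply_unitary_inner hU v
  rw [inner_self_eq_norm_sq_to_K, inner_self_eq_norm_sq_to_K] at h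
  have h2 : ‖mApply U v‖ ^ 2 = ‖v‖ ^ 2 := by exact_mod_cast h
  nlinarith [norm_nonneg (mApply U v), norm_nonneg v]

lemma foldl_snd_sub_norm (A : QFAC Alph S n) (z : List Alph) (s : S) (v w : QState n) :
    ‖(z.foldl (step A) (s, v)).2 - (z.foldl (step A) (s, w)).2‖ = ‖v - w‖ := by
  induction z generalizing s v w with
  | nil => rfl
  | cons a z ih =>
    simp only [List.foldl_cons, step]
    rw [ih]
    have h : mApply (A.U s a) v - mApply (A.U s a) w = mApply (A.U s a) (v - w) :=
      (map_sub (Matrix.toEuclideanLin (A.U s a)) v w).symm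
    rw [h, mApply_unitary_norm (A.U_unitary s a)]

lemma foldl_snd_zero (A : QFAC Alph S n) (z : List Alph) (s : S) :
    (z.foldl (step A) (s, (0 : QState n))).2 = 0 := by
  induction z generalizing s with
  | nil => rfl
  | cons a z ih =>
    simp only [List.foldl_cons, step]
    rw [show mApply (A.U s a) 0 = 0 from map_zero (Matrix.toEuclideanLin (A.U s a))]
    exact ih _

lemma foldl_snd_norm (A : QFAC Alph S n) (z : List Alph) (s : S) (v : QState n) :
    ‖(z.foldl (step A) (s, v)).2‖ = ‖v‖ := by
  have h := foldl_snd_sub_norm A z s v 0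
  rw [foldl_snd_zero, sub_zero, sub_zero] at h
  exact h

lemma qState_norm (A : QFAC Alph S n) (x : List Alph) : ‖A.qState x‖ = 1 := by
  rw [qState_def, foldl_snd_norm, A.ψ0_unit]

lemma mApply_proj_norm_le {P : Matrix (Fin n) (Fin n) ℂ}
    (h1 : P.conjTranspose = P) (h2 : P * P = P) (v : QState n) : ‖mApply P v‖ ≤ ‖v‖ := by
  rcases eq_or_lt_of_le (norm_nonneg (mApply P v)) with hz | hz
  · rw [← hz]; exact norm_nonneg v
  have hidem : mApply P (mApply P v) = mApply P v := by
    have h3 : Matrix.toEuclideanLin P (Matrix.toEuclideanLin P v)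
        = Matrix.toEuclideanLin (P * P) v := by
      simp [Matrix.toEuclideanLin_apply, Matrix.mulVec_mulVec]
    simpa [mApply, h2] using h3
  have key : ⟪mApply P v, mApply P v⟫ = ⟪v, mApply P v⟫ := by
    calc ⟪mApply P v, mApply P v⟫
        = ⟪v, LinearMap.adjoint (Matrix.toEuclideanLin P) (mApply P v)⟫ :=
          (LinearMap.adjoint_inner_right _ _ _).symm
      _ = ⟪v, mApply P v⟫ := by
          rw [← Matrix.toEuclideanLin_conjTranspose_eq_adjoint, h1]
          exact congrArg _ hidem
  have hsq : ‖mApply P v‖ ^ 2 = Complex.re ⟪v, mApply P v⟫ := by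
    rw [← key]
    exact (inner_self_eq_norm_sq (𝕜 := ℂ) (mApply P v)).symm
  have hb : Complex.re ⟪v, mApply P v⟫ ≤ ‖v‖ * ‖mApply P v‖ :=
    le_trans (Complex.re_le_norm _)
      (by exact norm_inner_le_norm _ _)
  nlinarith [hz]

/-- Key separation: words reaching the same classical state that are not
Myhill–Nerode equivalent have quantum states at distance at least `ε`. -/
lemma separation (A : QFAC Alph S n) (L : Set (List Alph)) (lam ε : ℝ)
    (hrec : A.Recognizes L lam ε) {x y : List Alph}
    (hxy : A.sState x = A.sState y) (hne : ¬ mnEquiv L x y) :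
    ε ≤ ‖A.qState x - A.qState y‖ := by
  rw [mnEquiv, not_forall] at hne
  obtain ⟨z, hz⟩ := hne
  have hs : A.sState (x ++ z) = A.sState (y ++ z) := by
    rw [sState_append, sState_append, hxy]
  set s' := A.sState (x ++ z) with hs'
  set a := ‖mApply (A.P s') (A.qState (x ++ z))‖ with ha
  set b := ‖mApply (A.P s') (A.qState (y ++ z))‖ with hb
  have hPa : A.probAcc (x ++ z) = a ^ 2 := by
    simp only [QFAC.probAcc]; rfl
  have hPb : A.probAcc (y ++ z) = b ^ 2 := by
    simp only [QFAC.probAcc]; rw [← hs]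
  have ha1 : a ≤ 1 := by
    rw [ha]
    calc ‖mApply (A.P s') (A.qState (x ++ z))‖ ≤ ‖A.qState (x ++ z)‖ :=
          mApply_proj_norm_le (A.P_proj s').1 (A.P_proj s').2 _
      _ = 1 := qState_norm A _
  have hb1 : b ≤ 1 := by
    rw [hb]
    calc ‖mApply (A.P s') (A.qState (y ++ z))‖ ≤ ‖A.qState (y ++ z)‖ :=
          mApply_proj_norm_le (A.P_proj s').1 (A.P_proj s').2 _
      _ = 1 := qState_norm A _
  have ha0 : 0 ≤ a := norm_nonneg _
  have hb0 : 0 ≤ b := norm_nonneg _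
  have hdist : ‖A.qState (x ++ z) - A.qState (y ++ z)‖ = ‖A.qState x - A.qState y‖ := by
    rw [qState_append, qState_append, hxy, foldl_snd_sub_norm]
  have habd : |a - b| ≤ ‖A.qState x - A.qState y‖ := by
    have h1 : |a - b| ≤ ‖mApply (A.P s') (A.qState (x ++ z)) -
        mApply (A.P s') (A.qState (y ++ z))‖ := abs_norm_sub_norm_le _ _
    have h2 : mApply (A.P s') (A.qState (x ++ z)) - mApply (A.P s') (A.qState (y ++ z))
        = mApply (A.P s') (A.qState (x ++ z) - A.qState (y ++ z)) :=
      (map_sub (Matrix.toEuclideanLin (A.P s')) _ _).symm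
    calc |a - b| ≤ ‖mApply (A.P s') (A.qState (x ++ z) - A.qState (y ++ z))‖ := by
          rwa [h2] at h1
      _ ≤ ‖A.qState (x ++ z) - A.qState (y ++ z)‖ :=
          mApply_proj_norm_le (A.P_proj s').1 (A.P_proj s').2 _
      _ = ‖A.qState x - A.qState y‖ := hdist
  have habs := abs_le.mp habd
  by_cases hx : x ++ z ∈ L
  · have hy : y ++ z ∉ L := fun h => hz ⟨fun _ => h, fun _ => hx⟩
    have e1 := hrec.1 _ hx
    have e2 := hrec.2 _ hy
    rw [hPa] at e1; rw [hPb] at e2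
    nlinarith [habs.1, habs.2]
  · have hy : y ++ z ∈ L := by
      by_contra hy
      exact hz ⟨fun h => absurd h hx, fun h => absurd h hy⟩
    have e1 := hrec.2 _ hx
    have e2 := hrec.1 _ hy
    rw [hPa] at e1; rw [hPb] at e2
    nlinarith [habs.1, habs.2]

/-- Volume-based packing bound: an `ε`-separated finite set inside the unit ball of
`ℝ^d` has at most `(1 + 2/ε)^d` points. -/
lemma packing_bound {d : ℕ} {ε : ℝ} (hε : 0 < ε) (T : Finset (EuclideanSpace ℝ (Fin d)))
    (hT1 : ∀ x ∈ T, ‖x‖ ≤ 1)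
    (hsep : ∀ x ∈ T, ∀ y ∈ T, x ≠ y → ε ≤ dist x y) :
    (T.card : ℝ) ≤ (1 + 2 / ε) ^ d := by
  have hr : (0 : ℝ) < ε / 2 := by linarith
  have hdisj : (T : Set (EuclideanSpace ℝ (Fin d))).PairwiseDisjoint
      (fun x => Metric.ball x (ε / 2)) := by
    intro x hx y hy hxy
    exact Metric.ball_disjoint_ball (by linarith [hsep x hx y hy hxy])
  have hsub : ∀ x ∈ T, Metric.ball x (ε / 2) ⊆
      Metric.ball (0 : EuclideanSpace ℝ (Fin d)) (1 + ε / 2) := by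
    intro x hx z hz
    rw [Metric.mem_ball] at hz ⊢
    have h1 : dist x 0 ≤ 1 := by rw [dist_zero_right]; exact hT1 x hx
    calc dist z 0 ≤ dist z x + dist x 0 := dist_triangle _ _ _
      _ < 1 + ε / 2 := by linarith
  have h1 : ∑ x ∈ T, volume (Metric.ball x (ε / 2)) ≤
      volume (Metric.ball (0 : EuclideanSpace ℝ (Fin d)) (1 + ε / 2)) := by
    rw [← measure_biUnion_finset hdisj (fun x _ => measurableSet_ball)]
    exact measure_mono (Set.iUnion₂_subset hsub)
  have hball : ∀ (x : EuclideanSpace ℝ (Fin d)) (r : ℝ), 0 < r →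
      volume (Metric.ball x r) = ENNReal.ofReal (r ^ d) *
        volume (Metric.ball (0 : EuclideanSpace ℝ (Fin d)) 1) := by
    intro x r hrpos
    rw [Measure.addHaar_ball_of_pos volume x hrpos, finrank_euclideanSpace_fin]
  have hRHS := hball 0 (1 + ε / 2) (by linarith)
  rw [Finset.sum_congr rfl (fun x _ => hball x _ hr), Finset.sum_const, hRHS] at h1
  set c := volume (Metric.ball (0 : EuclideanSpace ℝ (Fin d)) 1) with hc
  have hc0 : c ≠ 0 := (measure_ball_pos _ _ one_pos).ne'
  have hctop : c ≠ ⊤ := measure_ball_lt_top.ne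
  rw [nsmul_eq_mul, ← mul_assoc] at h1
  have h2 : (T.card : ℝ≥0∞) * ENNReal.ofReal ((ε / 2) ^ d) ≤
      ENNReal.ofReal ((1 + ε / 2) ^ d) := (ENNReal.mul_le_mul_iff_left hc0 hctop).mp h1
  have h3 : (T.card : ℝ) * (ε / 2) ^ d ≤ (1 + ε / 2) ^ d := by
    rw [← ENNReal.ofReal_natCast, ← ENNReal.ofReal_mul (by positivity)] at h2
    exact (ENNReal.ofReal_le_ofReal_iff (by positivity)).mp h2
  have hpow : (0 : ℝ) < (ε / 2) ^ d := by positivity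
  rw [← le_div_iff₀ hpow] at h3
  have h4 : ((1 + ε / 2) / (ε / 2) : ℝ) = 1 + 2 / ε := by
    field_simp
    ring
  rw [← h4, div_pow]
  exact h3

end QFACaux


/-- If a 1QFAC with classical state set `S` and `n` quantum basis states
recognizes `L` with cut-point `lam` isolated by `ε`, then for each classical state `s`,
the set `A_s = {w : s_w = s}` splits into at most `(1 + 2/ε)^(2n)` Myhill–Nerode classes. -/
theorem stmt_3 {Alph S : Type} [Fintype Alph] [Fintype S] {n : ℕ}
    (A : QFAC Alph S n) (L : Set (List Alph)) (lam ε : ℝ)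
    (hlam : 0 < lam ∧ lam < 1) (hε : 0 < ε)
    (hrec : A.Recognizes L lam ε) (s : S) :
    Finite (Quotient ((mnSetoid L).comap
      (Subtype.val : {w : List Alph // A.sState w = s} → List Alph))) ∧
    (Nat.card (Quotient ((mnSetoid L).comap
      (Subtype.val : {w : List Alph // A.sState w = s} → List Alph))) : ℝ)
      ≤ (1 + 2 / ε) ^ (2 * n) := by
  classical
  set Q := Quotient ((mnSetoid L).comap
      (Subtype.val : {w : List Alph // A.sState w = s} → List Alph)) with hQ
  letI : InnerProductSpace ℝ (QState n) := InnerProductSpace.complexToReal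
  set d := Module.finrank ℝ (QState n) with hd
  have hd2 : d = 2 * n := by
    rw [hd, finrank_real_of_complex, finrank_euclideanSpace_fin]
  let e : QState n ≃ₗᵢ[ℝ] EuclideanSpace ℝ (Fin d) := (stdOrthonormalBasis ℝ (QState n)).repr
  let g : Q → EuclideanSpace ℝ (Fin d) := fun c => e (A.qState c.out.val)
  have hgnorm : ∀ c : Q, ‖g c‖ = 1 := by
    intro c
    rw [show ‖g c‖ = ‖A.qState c.out.val‖ from e.norm_map _]
    exact QFACaux.qState_norm A _
  have hgsep : ∀ c c' : Q, c ≠ c' → ε ≤ dist (g c) (g c') := by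
    intro c c' hne
    have hmn : ¬ mnEquiv L c.out.val c'.out.val :=
      fun h => hne (Quotient.out_equiv_out.mp h)
    have hsS : A.sState c.out.val = A.sState c'.out.val := by
      rw [c.out.property, c'.out.property]
    have hsep := QFACaux.separation A L lam ε hrec hsS hmn
    rw [dist_eq_norm, show g c - g c' = e (A.qState c.out.val - A.qState c'.out.val) from
      (e.map_sub _ _).symm, e.norm_map]
    exact hsep
  have hginj : Function.Injective g := by
    intro c c' h
    by_contra hne
    have := hgsep c c' hne
    rw [h, dist_self] at this
    linarith
  have key : ∀ T : Finset Q, (T.card : ℝ) ≤ (1 + 2 / ε) ^ (2 * n) := by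
    intro T
    have hb := QFACaux.packing_bound hε (T.image g)
      (fun x hx => by
        obtain ⟨c, _, rfl⟩ := Finset.mem_image.mp hx
        exact le_of_eq (hgnorm c))
      (fun x hx y hy hxy => by
        obtain ⟨c, _, rfl⟩ := Finset.mem_image.mp hx
        obtain ⟨c', _, rfl⟩ := Finset.mem_image.mp hy
        exact hgsep c c' (fun h => hxy (by rw [h])))
    rw [Finset.card_image_of_injective _ hginj, hd2] at hb
    exact hb
  have hfin : Finite Q := by
    by_contra hinf
    rw [not_finite_iff_infinite] at hinf
    obtain ⟨T, hT⟩ := Infinite.exists_subset_card_eq Q (⌈(1 + 2 / ε) ^ (2 * n)⌉₊ + 1)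
    have h1 := key T
    rw [hT] at h1
    have h2 : ((1 + 2 / ε) ^ (2 * n) : ℝ) ≤ ⌈((1 + 2 / ε) ^ (2 * n) : ℝ)⌉₊ := Nat.le_ceil _
    push_cast at h1
    linarith
  refine ⟨hfin, ?_⟩
  letI : Fintype Q := Fintype.ofFinite Q
  rw [Nat.card_eq_fintype_card, ← Finset.card_univ]
  exact key Finset.univ

end
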